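/- Assume s' = −s. Then 𝔸 = −(s/2)·I_n, and the map α : 𝔥 → 𝔤 is an injective homomorphism of real Lie algebras, i.e. α([X,Y]) = [α(X), α(Y)] for all X, Y ∈ 𝔥. (Algebraic form of the statement that (S^p × S^q, (sḡ₁, −sḡ₂)) is conformally flat: the curvature κ of the normal Cartan connection vanishes identically.) -/

import Mathlib

open Matrix

noncomputable section

/-- The sign `sgn(s')` of a (nonzero) real number. -/
def sgn (s' : ℝ) : ℝ := if 0 < s' then 1 else -1

/-- Index type of `ℝⁿ`, `n = p + q`. -/
abbrev NIdx (p q : ℕ) := Fin p ⊕ Fin q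

/-- Index type for block matrices of block sizes `1, n, 1` with `n = p + q`. -/
abbrev BigIdx (p q : ℕ) := (Fin 1 ⊕ (Fin p ⊕ Fin q)) ⊕ Fin 1

/-- Elements of `𝔥 = so(p+1) × so(q+1)`, written as pairs of `(1+p)`- and
`(1+q)`-indexed matrices. -/
abbrev HElt (p q : ℕ) :=
  Matrix (Fin 1 ⊕ Fin p) (Fin 1 ⊕ Fin p) ℝ × Matrix (Fin 1 ⊕ Fin q) (Fin 1 ⊕ Fin q) ℝ

/-- Membership in `𝔥 = so(p+1) × so(q+1)`: both components are skew-symmetric. -/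
def skewPair (p q : ℕ) (X : HElt p q) : Prop := X.1ᵀ = -X.1 ∧ X.2ᵀ = -X.2

/-- The componentwise commutator bracket of `𝔥 = so(p+1) × so(q+1)`. -/
def hBracket (p q : ℕ) (X Y : HElt p q) : HElt p q :=
  (X.1 * Y.1 - Y.1 * X.1, X.2 * Y.2 - Y.2 * X.2)

/-- `𝐠 = diag(I_p, ε I_q)`, `ε = sgn s'`. -/
def gMat (p q : ℕ) (s' : ℝ) : Matrix (NIdx p q) (NIdx p q) ℝ :=
  fromBlocks 1 0 0 (sgn s' • 1)

/-- `J = [[0,0,1],[0,𝐠,0],[1,0,0]]` (block sizes `1, n, 1`), so that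
`𝔤 = so(J) = {M : MᵗJ + JM = 0}`. -/
def JMat (p q : ℕ) (s' : ℝ) : Matrix (BigIdx p q) (BigIdx p q) ℝ :=
  fromBlocks
    (fromBlocks 0 0 0 (gMat p q s'))
    (Matrix.of fun i _ => Sum.elim (fun _ => (1 : ℝ)) (fun _ => 0) i)
    (Matrix.of fun _ j => Sum.elim (fun _ => (1 : ℝ)) (fun _ => 0) j)
    0

/-- The rho-tensor
`𝔸 = −(1/(2δ))((2sΔ+m)·diag(I_p,0) + (2s'Δ−m)·ε·diag(0,I_q))`, where
`δ = (n−1)(n−2)`, `Δ = (p−1)(q−1)`, `m = s·p(p−1) − s'·q(q−1)`, `ε = sgn s'`. -/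
def AMat (p q : ℕ) (s s' : ℝ) : Matrix (NIdx p q) (NIdx p q) ℝ :=
  (-(1 / (2 * (((p : ℝ) + (q : ℝ) - 1) * ((p : ℝ) + (q : ℝ) - 2))))) •
    ((2 * s * (((p : ℝ) - 1) * ((q : ℝ) - 1)) +
        (s * p * ((p : ℝ) - 1) - s' * q * ((q : ℝ) - 1))) •
      (fromBlocks 1 0 0 0 : Matrix (NIdx p q) (NIdx p q) ℝ) +
     ((2 * s' * (((p : ℝ) - 1) * ((q : ℝ) - 1)) -
        (s * p * ((p : ℝ) - 1) - s' * q * ((q : ℝ) - 1))) * sgn s') •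
      (fromBlocks 0 0 0 1 : Matrix (NIdx p q) (NIdx p q) ℝ))

/-- The `ℝᵐ`-component `v` of an element `[[0,−vᵗ],[v,A]]` of `so(m+1)`. -/
def vPart {m : ℕ} (P : Matrix (Fin 1 ⊕ Fin m) (Fin 1 ⊕ Fin m) ℝ) : Fin m → ℝ :=
  fun i => P (Sum.inr i) (Sum.inl 0)

/-- `x := (v/√s, w/√|s'|) ∈ ℝⁿ` for `X = (v ⊕ A₁, w ⊕ A₂) ∈ 𝔥`. -/
def xVec (p q : ℕ) (s s' : ℝ) (X : HElt p q) : NIdx p q → ℝ :=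
  Sum.elim (fun i => vPart X.1 i / Real.sqrt s) (fun j => vPart X.2 j / Real.sqrt |s'|)

/-- The invariant Cartan connection `α : 𝔥 → 𝔤`: for `X = (v ⊕ A₁, w ⊕ A₂)` and
`x = (v/√s, w/√|s'|)`, `α(X)` is the block matrix (block sizes `1, n, 1`) with
`(1,2)`-block `xᵗ𝔸`, `(2,1)`-block `x`, `(2,2)`-block `diag(A₁,A₂)`,
`(2,3)`-block `−𝐠𝔸x`, `(3,2)`-block `−xᵗ𝐠`, and all other blocks zero. -/
def alphaMap (p q : ℕ) (s s' : ℝ) (X : HElt p q) :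
    Matrix (BigIdx p q) (BigIdx p q) ℝ :=
  fromBlocks
    (fromBlocks 0
      (Matrix.of fun _ j => Matrix.vecMul (xVec p q s s' X) (AMat p q s s') j)
      (Matrix.of fun i _ => xVec p q s s' X i)
      (fromBlocks (toBlocks₂₂ X.1) 0 0 (toBlocks₂₂ X.2)))
    (Matrix.of fun i _ => Sum.elim (fun _ => (0 : ℝ))
      (fun k => -(Matrix.mulVec (gMat p q s' * AMat p q s s') (xVec p q s s' X) k)) i)
    (Matrix.of fun _ j => Sum.elim (fun _ => (0 : ℝ))
      (fun k => -(Matrix.vecMul (xVec p q s s' X) (gMat p q s') k)) j)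
    0

/-- The curvature `κ(X,Y) = [α(X),α(Y)] − α([X,Y])` of the Cartan connection `α`. -/
def kappaMap (p q : ℕ) (s s' : ℝ) (X Y : HElt p q) :
    Matrix (BigIdx p q) (BigIdx p q) ℝ :=
  alphaMap p q s s' X * alphaMap p q s s' Y - alphaMap p q s s' Y * alphaMap p q s s' X -
    alphaMap p q s s' (hBracket p q X Y)


lemma sgn_neg_of_pos {s : ℝ} (hs : 0 < s) : sgn (-s) = -1 := by
  simp [sgn]; intro h; linarith

lemma AMat_eq (p q : ℕ) (hn : 3 ≤ p + q) (s : ℝ) (hs : 0 < s) :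
    AMat p q s (-s) = (-(s / 2)) • (1 : Matrix (NIdx p q) (NIdx p q) ℝ) := by
  have hpq : (3 : ℝ) ≤ (p : ℝ) + q := by exact_mod_cast hn
  have hd : ((p : ℝ) + (q : ℝ) - 1) * ((p : ℝ) + (q : ℝ) - 2) ≠ 0 := by nlinarith
  have hone : (1 : Matrix (NIdx p q) (NIdx p q) ℝ) =
      fromBlocks 1 0 0 0 + fromBlocks 0 0 0 1 := by
    simp [← fromBlocks_one, fromBlocks_add]
  have c1 : -(1 / (2 * (((p : ℝ) + (q : ℝ) - 1) * ((p : ℝ) + (q : ℝ) - 2)))) *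
      (2 * s * (((p : ℝ) - 1) * ((q : ℝ) - 1)) +
        (s * p * ((p : ℝ) - 1) - (-s) * q * ((q : ℝ) - 1))) = -(s / 2) := by
    rw [neg_mul, one_div, inv_mul_eq_div, neg_inj, div_eq_iff (mul_ne_zero two_ne_zero hd)]
    ring
  have c2 : -(1 / (2 * (((p : ℝ) + (q : ℝ) - 1) * ((p : ℝ) + (q : ℝ) - 2)))) *
      ((2 * (-s) * (((p : ℝ) - 1) * ((q : ℝ) - 1)) -
        (s * p * ((p : ℝ) - 1) - (-s) * q * ((q : ℝ) - 1))) * (-1)) = -(s / 2) := by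
    rw [neg_mul, one_div, inv_mul_eq_div, neg_inj, div_eq_iff (mul_ne_zero two_ne_zero hd)]
    ring
  rw [AMat, sgn_neg_of_pos hs, hone, smul_add, smul_smul, smul_smul, c1, c2, smul_add]

/-- the sign vector of `𝐠` when `ε = -1`. -/
def gs (p q : ℕ) : NIdx p q → ℝ := Sum.elim (fun _ => 1) (fun _ => -1)

lemma div_left_injective' {c : ℝ} (hc : c ≠ 0) {a b : ℝ} (h : a / c = b / c) :
    a = b := by
  field_simp at h
  exact h

lemma alpha_eq (p q : ℕ) (hn : 3 ≤ p + q) (s : ℝ) (hs : 0 < s) (X : HElt p q) :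
    alphaMap p q s (-s) X =
    fromBlocks
      (fromBlocks 0 (Matrix.of fun _ k => -(s/2) * xVec p q s (-s) X k)
        (Matrix.of fun k _ => xVec p q s (-s) X k)
        (fromBlocks (toBlocks₂₂ X.1) 0 0 (toBlocks₂₂ X.2)))
      (Matrix.of fun i _ => Sum.elim (fun _ => (0:ℝ))
        (fun k => s/2 * (gs p q k * xVec p q s (-s) X k)) i)
      (Matrix.of fun _ j => Sum.elim (fun _ => (0:ℝ))
        (fun k => -(gs p q k * xVec p q s (-s) X k)) j)
      0 := by
  have hA := AMat_eq p q hn s hs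
  have hg : gMat p q (-s) = fromBlocks 1 0 0 (-1) := by
    rw [gMat, sgn_neg_of_pos hs]; norm_num
  rw [alphaMap, hA, hg]
  ext i j
  rcases i with (i | (i | i)) | i <;> rcases j with (j | (j | j)) | j <;>
    simp [Matrix.vecMul, Matrix.mulVec, dotProduct, Fintype.sum_sum_type, gs,
      one_apply, Finset.sum_ite_eq, mul_comm, Fin.sum_univ_one, Matrix.smul_apply,
      Matrix.neg_apply]

set_option maxHeartbeats 1000000 in
/-- **`(Sᵖ × S^q, (sḡ₁, −sḡ₂))` is conformally flat** (algebraic form): when `s' = −s`,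
the rho-tensor is `𝔸 = −(s/2)·Iₙ` and the Cartan connection `α : 𝔥 → 𝔤` is an injective
homomorphism of real Lie algebras, i.e. `α([X,Y]) = [α(X), α(Y)]` for all `X, Y ∈ 𝔥`;
equivalently, the curvature `κ` of the normal Cartan connection vanishes identically. -/
theorem conformally_flat_of_opposite_radii (p q : ℕ) (hp : 1 ≤ p) (hq : 1 ≤ q)
    (hn : 3 ≤ p + q) (s : ℝ) (hs : 0 < s) :
    AMat p q s (-s) = (-(s / 2)) • (1 : Matrix (NIdx p q) (NIdx p q) ℝ) ∧
    (∀ X Y : HElt p q, skewPair p q X → skewPair p q Y →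
      alphaMap p q s (-s) X = alphaMap p q s (-s) Y → X = Y) ∧
    (∀ X Y : HElt p q, skewPair p q X → skewPair p q Y →
      alphaMap p q s (-s) (hBracket p q X Y) =
        alphaMap p q s (-s) X * alphaMap p q s (-s) Y -
          alphaMap p q s (-s) Y * alphaMap p q s (-s) X) := by
  have hsq : Real.sqrt s * Real.sqrt s = s := Real.mul_self_sqrt hs.le
  have hsne : Real.sqrt s ≠ 0 := ne_of_gt (Real.sqrt_pos.2 hs)
  refine ⟨AMat_eq p q hn s hs, ?_, ?_⟩
  · intro X Y hX hY h
    rw [alpha_eq p q hn s hs X, alpha_eq p q hn s hs Y] at h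
    have hx : ∀ k, xVec p q s (-s) X k = xVec p q s (-s) Y k := fun k => by
      have := congrFun (congrFun h (Sum.inl (Sum.inr k))) (Sum.inl (Sum.inl 0))
      simpa using this
    have habs : |(-s : ℝ)| = s := by rw [abs_neg, abs_of_pos hs]
    have hv1 : ∀ i, vPart X.1 i = vPart Y.1 i := fun i => by
      have := hx (Sum.inl i)
      simp only [xVec, Sum.elim_inl] at this
      exact div_left_injective' hsne this
    have hv2 : ∀ i, vPart X.2 i = vPart Y.2 i := fun i => by
      have := hx (Sum.inr i)
      simp only [xVec, Sum.elim_inr, habs] at this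
      exact div_left_injective' hsne this
    have hb : ∀ a b, (fromBlocks (toBlocks₂₂ X.1) 0 0 (toBlocks₂₂ X.2) :
        Matrix (NIdx p q) (NIdx p q) ℝ) a b =
        (fromBlocks (toBlocks₂₂ Y.1) 0 0 (toBlocks₂₂ Y.2) :
        Matrix (NIdx p q) (NIdx p q) ℝ) a b := fun a b => by
      have := congrFun (congrFun h (Sum.inl (Sum.inr a))) (Sum.inl (Sum.inr b))
      simpa using this
    have hb1 : ∀ a b, X.1 (Sum.inr a) (Sum.inr b) = Y.1 (Sum.inr a) (Sum.inr b) :=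
      fun a b => by
        have := hb (Sum.inl a) (Sum.inl b); simpa [toBlocks₂₂] using this
    have hb2 : ∀ a b, X.2 (Sum.inr a) (Sum.inr b) = Y.2 (Sum.inr a) (Sum.inr b) :=
      fun a b => by
        have := hb (Sum.inr a) (Sum.inr b); simpa [toBlocks₂₂] using this
    have hX1 : ∀ a b, X.1 a b = - X.1 b a := fun a b => by
      have := congrFun (congrFun hX.1 b) a; simpa using this
    have hX2 : ∀ a b, X.2 a b = - X.2 b a := fun a b => by
      have := congrFun (congrFun hX.2 b) a; simpa using this
    have hY1 : ∀ a b, Y.1 a b = - Y.1 b a := fun a b => by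
      have := congrFun (congrFun hY.1 b) a; simpa using this
    have hY2 : ∀ a b, Y.2 a b = - Y.2 b a := fun a b => by
      have := congrFun (congrFun hY.2 b) a; simpa using this
    refine Prod.ext ?_ ?_ <;> ext a b
    · rcases a with a | a <;> rcases b with b | b
      · have h1 := hX1 (Sum.inl a) (Sum.inl b)
        have h2 := hY1 (Sum.inl a) (Sum.inl b)
        have ha : a = b := Subsingleton.elim a b
        subst ha
        have := hX1 (Sum.inl a) (Sum.inl a)
        have := hY1 (Sum.inl a) (Sum.inl a)
        linarith
      · have ha : a = 0 := Subsingleton.elim a 0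
        subst ha
        rw [hX1 (Sum.inl 0) (Sum.inr b), hY1 (Sum.inl 0) (Sum.inr b)]
        have hv := hv1 b
        simp only [vPart] at hv
        rw [hv]
      · have hb0 : b = 0 := Subsingleton.elim b 0
        subst hb0
        have hv := hv1 a
        simp only [vPart] at hv
        exact hv
      · exact hb1 a b
    · rcases a with a | a <;> rcases b with b | b
      · have ha : a = b := Subsingleton.elim a b
        subst ha
        have := hX2 (Sum.inl a) (Sum.inl a)
        have := hY2 (Sum.inl a) (Sum.inl a)
        linarith
      · have ha : a = 0 := Subsingleton.elim a 0
        subst ha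
        rw [hX2 (Sum.inl 0) (Sum.inr b), hY2 (Sum.inl 0) (Sum.inr b)]
        have hv := hv2 b
        simp only [vPart] at hv
        rw [hv]
      · have hb0 : b = 0 := Subsingleton.elim b 0
        subst hb0
        have hv := hv2 a
        simp only [vPart] at hv
        exact hv
      · exact hb2 a b
  · intro X Y hX hY
    have hX1 : ∀ a b, X.1 a b = - X.1 b a := fun a b => by
      have := congrFun (congrFun hX.1 b) a; simpa using this
    have hX2 : ∀ a b, X.2 a b = - X.2 b a := fun a b => by
      have := congrFun (congrFun hX.2 b) a; simpa using this
    have hY1 : ∀ a b, Y.1 a b = - Y.1 b a := fun a b => by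
      have := congrFun (congrFun hY.1 b) a; simpa using this
    have hY2 : ∀ a b, Y.2 a b = - Y.2 b a := fun a b => by
      have := congrFun (congrFun hY.2 b) a; simpa using this
    have dX1 : ∀ a, X.1 a a = 0 := fun a => by have := hX1 a a; linarith
    have dX2 : ∀ a, X.2 a a = 0 := fun a => by have := hX2 a a; linarith
    have dY1 : ∀ a, Y.1 a a = 0 := fun a => by have := hY1 a a; linarith
    have dY2 : ∀ a, Y.2 a a = 0 := fun a => by have := hY2 a a; linarith
    have oX1 : ∀ b, X.1 (Sum.inl 0) (Sum.inr b) = - X.1 (Sum.inr b) (Sum.inl 0) :=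
      fun b => hX1 _ _
    have oX2 : ∀ b, X.2 (Sum.inl 0) (Sum.inr b) = - X.2 (Sum.inr b) (Sum.inl 0) :=
      fun b => hX2 _ _
    have oY1 : ∀ b, Y.1 (Sum.inl 0) (Sum.inr b) = - Y.1 (Sum.inr b) (Sum.inl 0) :=
      fun b => hY1 _ _
    have oY2 : ∀ b, Y.2 (Sum.inl 0) (Sum.inr b) = - Y.2 (Sum.inr b) (Sum.inl 0) :=
      fun b => hY2 _ _
    rw [alpha_eq p q hn s hs, alpha_eq p q hn s hs X, alpha_eq p q hn s hs Y]
    ext i j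
    rcases i with (i | (i | i)) | i <;> rcases j with (j | (j | j)) | j <;>
      simp only [hBracket, xVec, vPart, toBlocks₂₂, gs, abs_neg, abs_of_pos hs,
        Matrix.mul_apply, Matrix.sub_apply, Fintype.sum_sum_type, Fin.sum_univ_one,
        Matrix.fromBlocks_apply₁₁, Matrix.fromBlocks_apply₁₂,
        Matrix.fromBlocks_apply₂₁, Matrix.fromBlocks_apply₂₂,
        Matrix.of_apply, Sum.elim_inl, Sum.elim_inr, Matrix.zero_apply,
        mul_zero, zero_mul, add_zero, zero_add, neg_zero, mul_one, one_mul,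
        mul_neg, neg_mul, neg_neg, Finset.sum_const_zero, sub_zero, zero_sub,
        dX1, dX2, dY1, dY2, oX1, oX2, oY1, oY2]
    -- 16 entry cases
    -- 1: (1,1)
    · simp only [div_eq_mul_inv, sub_eq_add_neg, neg_add, neg_neg, neg_mul, mul_neg,
        mul_add, add_mul, mul_sub, sub_mul, Finset.mul_sum, Finset.sum_mul,
        Finset.sum_neg_distrib, Finset.sum_add_distrib]
      simp [mul_comm, mul_left_comm, mul_assoc]
      all_goals ring
    -- 2: (1,2)-p : skew
    · have sX : ∀ k, X.1 (Sum.inr k) (Sum.inr j) = -X.1 (Sum.inr j) (Sum.inr k) :=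
        fun k => hX1 _ _
      have sY : ∀ k, Y.1 (Sum.inr k) (Sum.inr j) = -Y.1 (Sum.inr j) (Sum.inr k) :=
        fun k => hY1 _ _
      simp only [sX, sY]
      simp only [div_eq_mul_inv, sub_eq_add_neg, neg_add, neg_neg, neg_mul, mul_neg,
        mul_add, add_mul, mul_sub, sub_mul, Finset.mul_sum, Finset.sum_mul,
        Finset.sum_neg_distrib, Finset.sum_add_distrib]
      simp [mul_comm, mul_left_comm, mul_assoc]
      all_goals ring
    -- 3: (1,2)-q : skew
    · have sX : ∀ k, X.2 (Sum.inr k) (Sum.inr j) = -X.2 (Sum.inr j) (Sum.inr k) :=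
        fun k => hX2 _ _
      have sY : ∀ k, Y.2 (Sum.inr k) (Sum.inr j) = -Y.2 (Sum.inr j) (Sum.inr k) :=
        fun k => hY2 _ _
      simp only [sX, sY]
      simp only [div_eq_mul_inv, sub_eq_add_neg, neg_add, neg_neg, neg_mul, mul_neg,
        mul_add, add_mul, mul_sub, sub_mul, Finset.mul_sum, Finset.sum_mul,
        Finset.sum_neg_distrib, Finset.sum_add_distrib]
      simp [mul_comm, mul_left_comm, mul_assoc]
      all_goals ring
    -- 4: (1,3)
    · simp only [div_eq_mul_inv, sub_eq_add_neg, neg_add, neg_neg, neg_mul, mul_neg,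
        mul_add, add_mul, mul_sub, sub_mul, Finset.mul_sum, Finset.sum_mul,
        Finset.sum_neg_distrib, Finset.sum_add_distrib]
      simp [mul_comm, mul_left_comm, mul_assoc]
      all_goals ring
    -- 5: (2,1)-p
    · simp only [div_eq_mul_inv, sub_eq_add_neg, neg_add, neg_neg, neg_mul, mul_neg,
        mul_add, add_mul, mul_sub, sub_mul, Finset.mul_sum, Finset.sum_mul,
        Finset.sum_neg_distrib, Finset.sum_add_distrib]
      simp [mul_comm, mul_left_comm, mul_assoc]
      all_goals ring
    -- 6: (2,2)-pp
    · have h2 : Real.sqrt s ^ 2 = s := Real.sq_sqrt hs.le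
      have h4 : Real.sqrt s ^ 4 = s ^ 2 := by
        rw [(by ring : (Real.sqrt s : ℝ) ^ 4 = (Real.sqrt s ^ 2) ^ 2), h2]
      field_simp
      ring_nf
      simp only [h2, h4]
    -- 7: (2,2)-pq
    · ring
    -- 8: (2,3)-p
    · simp only [div_eq_mul_inv, sub_eq_add_neg, neg_add, neg_neg, neg_mul, mul_neg,
        mul_add, add_mul, mul_sub, sub_mul, Finset.mul_sum, Finset.sum_mul,
        Finset.sum_neg_distrib, Finset.sum_add_distrib]
      simp [mul_comm, mul_left_comm, mul_assoc]
      all_goals ring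
    -- 9: (2,1)-q
    · simp only [div_eq_mul_inv, sub_eq_add_neg, neg_add, neg_neg, neg_mul, mul_neg,
        mul_add, add_mul, mul_sub, sub_mul, Finset.mul_sum, Finset.sum_mul,
        Finset.sum_neg_distrib, Finset.sum_add_distrib]
      simp [mul_comm, mul_left_comm, mul_assoc]
      all_goals ring
    -- 10: (2,2)-qp
    · ring
    -- 11: (2,2)-qq
    · have h2 : Real.sqrt s ^ 2 = s := Real.sq_sqrt hs.le
      have h4 : Real.sqrt s ^ 4 = s ^ 2 := by
        rw [(by ring : (Real.sqrt s : ℝ) ^ 4 = (Real.sqrt s ^ 2) ^ 2), h2]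
      field_simp
      ring_nf
      simp only [h2, h4]
    -- 12: (2,3)-q
    · simp only [div_eq_mul_inv, sub_eq_add_neg, neg_add, neg_neg, neg_mul, mul_neg,
        mul_add, add_mul, mul_sub, sub_mul, Finset.mul_sum, Finset.sum_mul,
        Finset.sum_neg_distrib, Finset.sum_add_distrib]
      simp [mul_comm, mul_left_comm, mul_assoc]
      all_goals ring
    -- 13: (3,1)
    · simp only [div_eq_mul_inv, sub_eq_add_neg, neg_add, neg_neg, neg_mul, mul_neg,
        mul_add, add_mul, mul_sub, sub_mul, Finset.mul_sum, Finset.sum_mul,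
        Finset.sum_neg_distrib, Finset.sum_add_distrib]
      simp [mul_comm, mul_left_comm, mul_assoc]
      all_goals ring
    -- 14: (3,2)-p : skew
    · have sX : ∀ k, X.1 (Sum.inr k) (Sum.inr j) = -X.1 (Sum.inr j) (Sum.inr k) :=
        fun k => hX1 _ _
      have sY : ∀ k, Y.1 (Sum.inr k) (Sum.inr j) = -Y.1 (Sum.inr j) (Sum.inr k) :=
        fun k => hY1 _ _
      simp only [sX, sY]
      simp only [div_eq_mul_inv, sub_eq_add_neg, neg_add, neg_neg, neg_mul, mul_neg,
        mul_add, add_mul, mul_sub, sub_mul, Finset.mul_sum, Finset.sum_mul,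
        Finset.sum_neg_distrib, Finset.sum_add_distrib]
      simp [mul_comm, mul_left_comm, mul_assoc]
      all_goals ring
    -- 15: (3,2)-q : skew
    · have sX : ∀ k, X.2 (Sum.inr k) (Sum.inr j) = -X.2 (Sum.inr j) (Sum.inr k) :=
        fun k => hX2 _ _
      have sY : ∀ k, Y.2 (Sum.inr k) (Sum.inr j) = -Y.2 (Sum.inr j) (Sum.inr k) :=
        fun k => hY2 _ _
      simp only [sX, sY]
      simp only [div_eq_mul_inv, sub_eq_add_neg, neg_add, neg_neg, neg_mul, mul_neg,
        mul_add, add_mul, mul_sub, sub_mul, Finset.mul_sum, Finset.sum_mul,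
        Finset.sum_neg_distrib, Finset.sum_add_distrib]
      simp [mul_comm, mul_left_comm, mul_assoc]
      all_goals ring
    -- 16: (3,3)
    · simp only [div_eq_mul_inv, sub_eq_add_neg, neg_add, neg_neg, neg_mul, mul_neg,
        mul_add, add_mul, mul_sub, sub_mul, Finset.mul_sum, Finset.sum_mul,
        Finset.sum_neg_distrib, Finset.sum_add_distrib]
      simp [mul_comm, mul_left_comm, mul_assoc]
      all_goals ring

end
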